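/- Let C be a monoidal groupoid (every morphism is invertible) with tensor unit 𝟙, and assume C is group-like: for every object X there exists an object X* with X ⊗ X* ≅ 𝟙. Then for all objects X, Y and all morphisms f, f' : X ⟶ Y there exists a unique h : 𝟙 ⟶ 𝟙 such that η_X(h) ≫ f = f'. In particular the action of the group Aut(𝟙) on Hom(X,Y) given by h • f = η_X(h) ≫ f is free and transitive whenever Hom(X,Y) is nonempty. -/

import Mathlib

open CategoryTheory MonoidalCategory

/-- `η_X(h) = ρ_X⁻¹ ≫ (X ◁ h) ≫ ρ_X`. -/
def eta {C : Type*} [Groupoid C] [MonoidalCategory C] (X : C) (h : 𝟙_ C ⟶ 𝟙_ C) : X ⟶ X :=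
  (ρ_ X).inv ≫ (X ◁ h) ≫ (ρ_ X).hom

/-- From `X ⊗ Y ≅ 𝟙`, the composite `tensorLeft Y ⋙ tensorLeft X` is iso to the identity. -/
def cancelIsoTL {C : Type*} [Category C] [MonoidalCategory C] (X Y : C) (e : X ⊗ Y ≅ 𝟙_ C) :
    tensorLeft Y ⋙ tensorLeft X ≅ 𝟭 C :=
  NatIso.ofComponents
    (fun Z => (α_ X Y Z).symm ≪≫ whiskerRightIso e Z ≪≫ λ_ Z)
    (by
      intro Z Z' f
      simp only [Functor.comp_obj, curriedTensor_obj_obj, Functor.id_obj, Functor.comp_map,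
        curriedTensor_obj_map, Functor.id_map, Iso.trans_hom, Iso.symm_hom, whiskerRightIso_hom]
      rw [associator_inv_naturality_right_assoc, whisker_exchange_assoc,
        leftUnitor_naturality]
      simp)

/-- `Xstar ⊗ X ≅ 𝟙` from `X ⊗ Xstar ≅ 𝟙` and `Xstar ⊗ Xss ≅ 𝟙`. -/
def leftInvIso {C : Type*} [Category C] [MonoidalCategory C] (X Xstar Xss : C)
    (e : X ⊗ Xstar ≅ 𝟙_ C) (d : Xstar ⊗ Xss ≅ 𝟙_ C) : Xstar ⊗ X ≅ 𝟙_ C :=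
  (ρ_ (Xstar ⊗ X)).symm ≪≫ whiskerLeftIso (Xstar ⊗ X) d.symm ≪≫ α_ Xstar X (Xstar ⊗ Xss)
    ≪≫ whiskerLeftIso Xstar ((α_ X Xstar Xss).symm ≪≫ whiskerRightIso e Xss ≪≫ λ_ Xss) ≪≫ d

theorem hom_is_torsor {C : Type*} [Groupoid C] [MonoidalCategory C]
    (grouplike : ∀ X : C, ∃ Xstar : C, Nonempty (X ⊗ Xstar ≅ 𝟙_ C)) :
    ∀ (X Y : C) (f f' : X ⟶ Y), ∃! h : 𝟙_ C ⟶ 𝟙_ C, eta X h ≫ f = f' := by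
  intro X Y f f'
  obtain ⟨Xstar, ⟨e⟩⟩ := grouplike X
  obtain ⟨Xss, ⟨d⟩⟩ := grouplike Xstar
  let equiv : C ≌ C :=
    CategoryTheory.Equivalence.mk (tensorLeft X) (tensorLeft Xstar)
      (cancelIsoTL Xstar X (leftInvIso X Xstar Xss e d)).symm (cancelIsoTL X Xstar e)
  haveI : (tensorLeft X).IsEquivalence := equiv.isEquivalence_functor
  obtain ⟨h, hh⟩ := (tensorLeft X).map_surjective
    ((ρ_ X).hom ≫ f' ≫ inv f ≫ (ρ_ X).inv)
  have hwh : X ◁ h = (ρ_ X).hom ≫ f' ≫ inv f ≫ (ρ_ X).inv := hh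
  have hf : eta X h ≫ f = f' := by simp [eta, hwh]
  refine ⟨h, hf, ?_⟩
  intro h' hh'
  have h1 : eta X h' ≫ f = eta X h ≫ f := hh'.trans hf.symm
  rw [cancel_mono f] at h1
  simp only [eta] at h1
  rw [Iso.cancel_iso_inv_left, cancel_mono] at h1
  exact (tensorLeft X).map_injective h1
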